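/- Let Y and Ỹ be Polish spaces, g: Y → Y, g̃: Ỹ → Ỹ Borel measurable, Π: Ỹ → Y Borel measurable with g ∘ Π = Π ∘ g̃. Let μ̃ be an ergodic g̃-invariant Borel probability measure with μ = Π_*μ̃. Suppose the set of continuity points of Π has full μ̃-measure. Then Π maps the weak* basin B(μ̃) into the weak* basin B(μ); that is, if (1/n) Σ_{j<n} δ_{g̃ʲ(x)} converges to μ̃ in the weak* topology, then (1/n) Σ_{j<n} δ_{gʲ(Π(x))} converges to μ in the weak* topology. -/

import Mathlib

open MeasureTheory Filter

private lemma nnreal_le_liminf_of_coe_le {u : ℕ → NNReal} {a : NNReal}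
    (hub : ∀ i, u i ≤ 1)
    (h : (a : ENNReal) ≤ atTop.liminf (fun i => ((u i : NNReal) : ENNReal))) :
    a ≤ atTop.liminf u := by
  have aux : ((atTop.liminf u : NNReal) : ENNReal)
      = atTop.liminf (fun i => ((u i : NNReal) : ENNReal)) := by
    refine Monotone.map_liminf_of_continuousAt (F := atTop) ENNReal.coe_mono u
      ENNReal.continuous_coe.continuousAt ?_ ?_
    · exact IsBoundedUnder.isCoboundedUnder_ge ⟨1, by
        simp only [eventually_map, eventually_atTop]
        exact ⟨0, fun b _ => hub b⟩⟩
    · exact ⟨0, by simp⟩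
  exact ENNReal.coe_le_coe.mp (by rwa [aux])

/-- Polish-space semiconjugacy with μ̃-a.e. continuity points: the image under Π of the
weak* basin of μ̃ is contained in the weak* basin of μ = Π_*μ̃.  Weak* convergence of
the empirical measures is phrased via integration of bounded continuous functions. -/
theorem stmt7 {Y Z : Type*}
    [TopologicalSpace Y] [PolishSpace Y] [MeasurableSpace Y] [BorelSpace Y]
    [TopologicalSpace Z] [PolishSpace Z] [MeasurableSpace Z] [BorelSpace Z]
    (g : Y → Y) (gt : Z → Z) (pr : Z → Y)
    (hg : Measurable g) (hgt : Measurable gt) (hpr : Measurable pr)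
    (hconj : g ∘ pr = pr ∘ gt)
    (μt : Measure Z) [IsProbabilityMeasure μt] (herg : Ergodic gt μt)
    (hcont : μt {z | ContinuousAt pr z} = 1)
    (x : Z)
    (hx : ∀ ψ : BoundedContinuousFunction Z ℝ,
      Tendsto (fun n : ℕ => (1 / (n : ℝ)) * ∑ j ∈ Finset.range n, ψ (gt^[j] x))
        atTop (nhds (∫ z, ψ z ∂μt))) :
    ∀ φ : BoundedContinuousFunction Y ℝ,
      Tendsto (fun n : ℕ => (1 / (n : ℝ)) * ∑ j ∈ Finset.range n, φ (g^[j] (pr x)))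
        atTop (nhds (∫ y, φ y ∂(Measure.map pr μt))) := by
  intro φ
  letI := TopologicalSpace.upgradeIsCompletelyMetrizable Z
  letI := TopologicalSpace.upgradeIsCompletelyMetrizable Y
  have hCm : MeasurableSet {z | ContinuousAt pr z} := measurableSet_of_continuousAt pr
  have hC : μt {z | ContinuousAt pr z}ᶜ = 0 := by
    have h2 := measure_compl (μ := μt) hCm (measure_ne_top μt _)
    rw [hcont, measure_univ] at h2
    simpa using h2
  -- iterated semiconjugacy
  have hiter : ∀ j : ℕ, g^[j] (pr x) = pr (gt^[j] x) := by
    intro j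
    induction j with
    | zero => rfl
    | succ n ih =>
        rw [Function.iterate_succ_apply', ih, Function.iterate_succ_apply']
        exact congrFun hconj _
  -- empirical measures
  set e : ℕ → Measure Z := fun n =>
    (((n + 1 : ℕ) : ENNReal))⁻¹ • ∑ j ∈ Finset.range (n + 1), Measure.dirac (gt^[j] x)
    with he
  have hprob : ∀ n, IsProbabilityMeasure (e n) := by
    intro n
    constructor
    simp only [he, Measure.smul_apply, Measure.coe_finset_sum, Finset.sum_apply,
      measure_univ, smul_eq_mul, Finset.sum_const, Finset.card_range, nsmul_eq_mul, mul_one]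
    exact ENNReal.inv_mul_cancel (by exact_mod_cast (Nat.succ_ne_zero n))
      (ENNReal.natCast_ne_top _)
  -- integral against empirical measures
  have key : ∀ (f : Z → ℝ), StronglyMeasurable f → ∀ n : ℕ,
      ∫ z, f z ∂(e n)
        = (((n + 1 : ℕ) : ℝ))⁻¹ * ∑ j ∈ Finset.range (n + 1), f (gt^[j] x) := by
    intro f hf n
    have hint : ∀ a : Z, Integrable f (Measure.dirac a) := by
      intro a
      refine ⟨hf.aestronglyMeasurable, ?_⟩
      rw [HasFiniteIntegral, lintegral_dirac' a (by
        exact (measurable_coe_nnreal_ennreal.comp hf.measurable.nnnorm))]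
      exact ENNReal.coe_lt_top
    rw [he]
    rw [integral_smul_measure, integral_finset_sum_measure (fun j _ => hint _)]
    simp only [integral_dirac' f _ hf, smul_eq_mul]
    congr 1
    rw [ENNReal.toReal_inv, ENNReal.toReal_natCast]
  set ν : ℕ → ProbabilityMeasure Z := fun n => ⟨e n, hprob n⟩ with hν_def
  set μP : ProbabilityMeasure Z := ⟨μt, ‹IsProbabilityMeasure μt›⟩ with hμP_def
  -- Step 1: weak convergence of empirical measures on Z
  have hν : Tendsto ν atTop (nhds μP) := by
    rw [ProbabilityMeasure.tendsto_iff_forall_integral_tendsto]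
    intro ψ
    have h1 := (hx ψ).comp (tendsto_add_atTop_nat 1)
    have : (fun n : ℕ => ∫ z, ψ z ∂(ν n : Measure Z))
        = fun n : ℕ => (1 / ((n + 1 : ℕ) : ℝ)) * ∑ j ∈ Finset.range (n + 1), ψ (gt^[j] x) := by
      funext n
      rw [show ((ν n : Measure Z)) = e n from rfl, key ψ ψ.continuous.stronglyMeasurable n]
      rw [one_div]
    rw [this]
    exact h1
  -- Step 2: weak convergence of pushforwards on Y
  have hmainY : Tendsto (fun n => (ν n).map hpr.aemeasurable) atTop
      (nhds (μP.map hpr.aemeasurable)) := by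
    apply tendsto_of_forall_isOpen_le_liminf
    intro G hG
    have hGm : MeasurableSet G := hG.measurableSet
    apply nnreal_le_liminf_of_coe_le (fun i => ProbabilityMeasure.apply_le_one _ _)
    simp only [ProbabilityMeasure.ennreal_coeFn_eq_coeFn_toMeasure,
      ProbabilityMeasure.toMeasure_map]
    have hmap : ∀ (m : Measure Z), Measure.map pr m G = m (pr ⁻¹' G) := fun m =>
      Measure.map_apply hpr hGm
    rw [hmap]
    have hsub : pr ⁻¹' G ⊆ interior (pr ⁻¹' G) ∪ {z | ContinuousAt pr z}ᶜ := by
      intro z hz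
      by_cases hzC : ContinuousAt pr z
      · left
        exact mem_interior_iff_mem_nhds.mpr (hzC (hG.mem_nhds hz))
      · right
        exact hzC
    have L2 : (μP : Measure Z) (pr ⁻¹' G) ≤ (μP : Measure Z) (interior (pr ⁻¹' G)) := by
      calc (μP : Measure Z) (pr ⁻¹' G)
          ≤ (μP : Measure Z) (interior (pr ⁻¹' G) ∪ {z | ContinuousAt pr z}ᶜ) :=
            measure_mono hsub
        _ ≤ (μP : Measure Z) (interior (pr ⁻¹' G)) + (μP : Measure Z)
            {z | ContinuousAt pr z}ᶜ := measure_union_le _ _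
        _ = (μP : Measure Z) (interior (pr ⁻¹' G)) := by
            rw [show ((μP : Measure Z)) = μt from rfl, hC, add_zero]
    have L3 : (μP : Measure Z) (interior (pr ⁻¹' G))
        ≤ atTop.liminf (fun i => (ν i : Measure Z) (interior (pr ⁻¹' G))) :=
      ProbabilityMeasure.le_liminf_measure_open_of_tendsto hν isOpen_interior
    have L4 : atTop.liminf (fun i => (ν i : Measure Z) (interior (pr ⁻¹' G)))
        ≤ atTop.liminf (fun i => (ν i : Measure Z) (pr ⁻¹' G)) :=
      liminf_le_liminf (Eventually.of_forall fun i => measure_mono interior_subset)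
    calc (μP : Measure Z) (pr ⁻¹' G) ≤ _ := L2
      _ ≤ _ := L3
      _ ≤ atTop.liminf (fun i => (ν i : Measure Z) (pr ⁻¹' G)) := L4
      _ = atTop.liminf (fun i => Measure.map pr (ν i : Measure Z) G) := by
          simp only [hmap]
  -- Step 3: extract the integral convergence for φ
  have hφ := ProbabilityMeasure.tendsto_iff_forall_integral_tendsto.mp hmainY φ
  have eq1 : ∀ n : ℕ, ∫ y, φ y ∂(((ν n).map hpr.aemeasurable : ProbabilityMeasure Y) : Measure Y)
      = (1 / ((n + 1 : ℕ) : ℝ)) * ∑ j ∈ Finset.range (n + 1), φ (g^[j] (pr x)) := by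
    intro n
    rw [ProbabilityMeasure.toMeasure_map,
      integral_map hpr.aemeasurable φ.continuous.aestronglyMeasurable]
    rw [show ((ν n : Measure Z)) = e n from rfl,
      key (fun z => φ (pr z)) ((φ.continuous.measurable.comp hpr).stronglyMeasurable) n]
    rw [one_div]
    congr 1
    exact Finset.sum_congr rfl fun j _ => by rw [hiter j]
  have eq2 : (∫ y, φ y ∂(Measure.map pr μt))
      = ∫ y, φ y ∂((μP.map hpr.aemeasurable : ProbabilityMeasure Y) : Measure Y) := by
    rw [ProbabilityMeasure.toMeasure_map]
    rfl
  rw [eq2]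
  apply (tendsto_add_atTop_iff_nat 1).mp
  exact hφ.congr eq1
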